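/- Let D ⊆ ℝ² be open, ψ₁, ψ₂ : D → ℂ′ of class C¹, and H : D → ℝ of class C¹. Define e^{u/2} := 2(ψ₂ψ̄₂ + ψ₁ψ̄₁), h := 2(ψ₂ψ̄₂ − ψ₁ψ̄₁), and the Dirac potential 𝒰 := −(H/2)·e^{u/2} + (i′/4)·h. Assume the nonlinear Dirac equations ∂_z ψ₂ + 𝒰ψ₁ = 0 and −∂_z̄ ψ₁ + 𝒰ψ₂ = 0 hold on D, and that 𝒰 = ε̃·exp(w/2) for some ε̃ ∈ {1, −1, i′, −i′} and some C¹ map w : D → ℂ′. Define φ₃ := 2ψ₁ψ̄₂, A := 2(ψ₁·∂_z(ψ̄₂) − ψ̄₂·∂_z ψ₁) − 4i′ψ₁²ψ̄₂², and B := ¼(2H − i′)·A − ¼φ₃². Then the row vector ψ̃ = (ψ₁, ψ₂) satisfies the Lax pair system ∂_z ψ̃ = ψ̃·Ũ and ∂_z̄ ψ̃ = ψ̃·Ṽ, where Ũ = [[½∂_z w + ½(∂_z H)·ε̃·exp(−w/2)·e^{u/2}, −ε̃·exp(w/2)], [B·ε̃·exp(−w/2), 0]] and Ṽ = [[0, −B̄·ε̃·exp(−w/2)],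 [ε̃·exp(w/2), ½∂_z̄ w + ½(∂_z̄ H)·ε̃·exp(−w/2)·e^{u/2}]]; conversely, any such ψ̃ solving this system satisfies the nonlinear Dirac equations above. -/

import Mathlib

noncomputable section

/-- Para-complex numbers modeled as the product ring ℝ × ℝ. -/
abbrev Cp : Type := ℝ × ℝ

/-- The para-complex unit i′ = (1, -1), satisfying i′² = 1. -/
def ip : Cp := (1, -1)

/-- Para-complex conjugation. -/
def pconj (z : Cp) : Cp := (z.2, z.1)

/-- Real part of a para-complex number. -/
def pRe (z : Cp) : ℝ := (z.1 + z.2) / 2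

/-- Imaginary part of a para-complex number. -/
def pIm (z : Cp) : ℝ := (z.1 - z.2) / 2

/-- Embedding of ℝ into the para-complex numbers. -/
def oR (r : ℝ) : Cp := (r, r)

/-- The exponential of the Banach algebra ℝ × ℝ (componentwise real exponential). -/
def pexp (z : Cp) : Cp := (Real.exp z.1, Real.exp z.2)

/-- The para-complex derivative ∂_z f = ½(∂ₓf + i′ ∂_y f). -/
def dz (f : Cp → Cp) (p : Cp) : Cp :=
  oR (1/2) * (fderiv ℝ f p (1, 0) + ip * fderiv ℝ f p (0, 1))

/-- The para-complex derivative ∂_z̄ f = ½(∂ₓf − i′ ∂_y f). -/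
def dzbar (f : Cp → Cp) (p : Cp) : Cp :=
  oR (1/2) * (fderiv ℝ f p (1, 0) - ip * fderiv ℝ f p (0, 1))

/-- Entrywise ∂_z of a row-vector-valued map. -/
def dzRow (f : Cp → Matrix (Fin 1) (Fin 2) Cp) (p : Cp) : Matrix (Fin 1) (Fin 2) Cp :=
  Matrix.of fun i j => dz (fun q => f q i j) p

/-- Entrywise ∂_z̄ of a row-vector-valued map. -/
def dzbarRow (f : Cp → Matrix (Fin 1) (Fin 2) Cp) (p : Cp) : Matrix (Fin 1) (Fin 2) Cp :=
  Matrix.of fun i j => dzbar (fun q => f q i j) p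

namespace LaxAux

/-! ### Algebraic lemmas on Cp -/

lemma pconj_mul (a b : Cp) : pconj (a * b) = pconj a * pconj b := rfl
lemma pconj_add (a b : Cp) : pconj (a + b) = pconj a + pconj b := rfl
lemma pconj_sub (a b : Cp) : pconj (a - b) = pconj a - pconj b := rfl
lemma pconj_neg (a : Cp) : pconj (-a) = -pconj a := rfl
lemma pconj_pconj (a : Cp) : pconj (pconj a) = a := rfl
lemma pconj_oR (r : ℝ) : pconj (oR r) = oR r := rfl
lemma pconj_ip : pconj ip = -ip := by
  apply Prod.ext <;> simp [pconj, ip]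
lemma pconj_two : pconj 2 = 2 := rfl
lemma pconj_four : pconj 4 = 4 := rfl
lemma pconj_pow_two (a : Cp) : pconj (a ^ 2) = pconj a * pconj a := by
  rw [pow_two]; rfl

lemma div_two_eq (z : Cp) : z / 2 = oR (1/2) * z := by
  apply Prod.ext <;>
    simp [oR, Prod.fst_div, Prod.snd_div, Prod.fst_mul, Prod.snd_mul] <;> ring

lemma pexp_add (a b : Cp) : pexp (a + b) = pexp a * pexp b := by
  apply Prod.ext <;>
    simp [pexp, Prod.fst_mul, Prod.snd_mul, Prod.fst_add, Prod.snd_add, Real.exp_add]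

lemma pexp_zero : pexp 0 = 1 := by
  apply Prod.ext <;> simp [pexp]

/-! ### Core algebraic identities -/

/-- Core algebraic identity for the ∂_z equation. -/
lemma key1 (Hq Hz p1 p2 c1 c2 d1 dc2 : Cp) :
    (-Hq*(p2*c2+p1*c1) + ip*oR (1/2)*(p2*c2-p1*c1)) * d1
      = p1 * ((-(Hq*((p2*dc2 + c2*(-(-Hq*(p2*c2+p1*c1) + ip*oR (1/2)*(p2*c2-p1*c1))*p1))
              + (p1*((-Hq*(p2*c2+p1*c1) - ip*oR (1/2)*(p2*c2-p1*c1))*c2) + c1*d1))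
            + (p2*c2+p1*c1)*Hz)
          + ip*oR (1/2)*((p2*dc2 + c2*(-(-Hq*(p2*c2+p1*c1) + ip*oR (1/2)*(p2*c2-p1*c1))*p1))
              - (p1*((-Hq*(p2*c2+p1*c1) - ip*oR (1/2)*(p2*c2-p1*c1))*c2) + c1*d1)))
          + oR (1/2)*Hz*(2*(p2*c2+p1*c1)))
        + p2 * (oR (1/4)*(2*Hq - ip)*(2*(p1*dc2 - c2*d1) - 4*ip*(p1*p1)*(c2*c2))
            - oR (1/4)*((2*p1*c2)*(2*p1*c2))) := by
  apply Prod.ext <;>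
    simp only [ip, oR, Prod.fst_mul, Prod.snd_mul, Prod.fst_add, Prod.snd_add, Prod.fst_sub,
      Prod.snd_sub, Prod.fst_neg, Prod.snd_neg] <;>
  · norm_num
    ring

/-- Core algebraic identity for the ∂_z̄ equation. -/
lemma key2 (Hq Hzb p1 p2 c1 c2 e2 ec1 : Cp) :
    (-Hq*(p2*c2+p1*c1) + ip*oR (1/2)*(p2*c2-p1*c1)) * e2
      = p1 * (-(oR (1/4)*(2*Hq + ip)*(2*(c1*e2 - p2*ec1) + 4*ip*(c1*c1)*(p2*p2))
            - oR (1/4)*((2*c1*p2)*(2*c1*p2))))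
        + p2 * ((-(Hq*((p2*(-(-Hq*(p2*c2+p1*c1) - ip*oR (1/2)*(p2*c2-p1*c1))*c1)
              + c2*e2)
              + (p1*ec1 + c1*((-Hq*(p2*c2+p1*c1) + ip*oR (1/2)*(p2*c2-p1*c1))*p2)))
            + (p2*c2+p1*c1)*Hzb)
          + ip*oR (1/2)*((p2*(-(-Hq*(p2*c2+p1*c1) - ip*oR (1/2)*(p2*c2-p1*c1))*c1)
              + c2*e2)
              - (p1*ec1 + c1*((-Hq*(p2*c2+p1*c1) + ip*oR (1/2)*(p2*c2-p1*c1))*p2))))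
          + oR (1/2)*Hzb*(2*(p2*c2+p1*c1))) := by
  apply Prod.ext <;>
    simp only [ip, oR, Prod.fst_mul, Prod.snd_mul, Prod.fst_add, Prod.snd_add, Prod.fst_sub,
      Prod.snd_sub, Prod.fst_neg, Prod.snd_neg] <;>
  · norm_num
    ring

/-! ### Calculus of the operators dz, dzbar via a sign-generic operator -/

/-- Generalized derivative with sign parameter. -/
def D' (s : Cp) (f : Cp → Cp) (p : Cp) : Cp :=
  oR (1/2) * (fderiv ℝ f p (1, 0) + s * fderiv ℝ f p (0, 1))

lemma dz_eq (f : Cp → Cp) (p : Cp) : dz f p = D' ip f p := rfl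

lemma dzbar_eq (f : Cp → Cp) (p : Cp) : dzbar f p = D' (-ip) f p := by
  simp [dzbar, D', sub_eq_add_neg, neg_mul]

lemma D'_congr {f g : Cp → Cp} {q : Cp} (s : Cp) (h : f =ᶠ[nhds q] g) :
    D' s f q = D' s g q := by
  simp [D', h.fderiv_eq]

lemma D'_add {f g : Cp → Cp} {q : Cp} (s : Cp) (hf : DifferentiableAt ℝ f q)
    (hg : DifferentiableAt ℝ g q) :
    D' s (fun r => f r + g r) q = D' s f q + D' s g q := by
  simp only [D', fderiv_fun_add hf hg, ContinuousLinearMap.add_apply]; ring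

lemma D'_neg {f : Cp → Cp} {q : Cp} (s : Cp) :
    D' s (fun r => -f r) q = -(D' s f q) := by
  simp only [D', fderiv_fun_neg, ContinuousLinearMap.neg_apply]; ring

lemma D'_mul {f g : Cp → Cp} {q : Cp} (s : Cp) (hf : DifferentiableAt ℝ f q)
    (hg : DifferentiableAt ℝ g q) :
    D' s (fun r => f r * g r) q = f q * D' s g q + g q * D' s f q := by
  simp only [D', fderiv_fun_mul hf hg, ContinuousLinearMap.add_apply,
    ContinuousLinearMap.smul_apply, smul_eq_mul]; ring

lemma D'_const_mul {f : Cp → Cp} {q : Cp} (s c : Cp) (hf : DifferentiableAt ℝ f q) :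
    D' s (fun r => c * f r) q = c * D' s f q := by
  have h : D' s (fun r => (fun _ : Cp => c) r * f r) q
      = (fun _ : Cp => c) q * D' s f q + f q * D' s (fun _ : Cp => c) q :=
    D'_mul s (differentiableAt_const c) hf
  simpa [D', fderiv_const] using h

lemma D'_sub {f g : Cp → Cp} {q : Cp} (s : Cp) (hf : DifferentiableAt ℝ f q)
    (hg : DifferentiableAt ℝ g q) :
    D' s (fun r => f r - g r) q = D' s f q - D' s g q := by
  simp only [sub_eq_add_neg]
  rw [D'_add s hf (g := fun r => -g r) hg.neg, D'_neg]

/-- pconj as a continuous linear map. -/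
def pconjL : Cp →L[ℝ] Cp :=
  (ContinuousLinearMap.snd ℝ ℝ ℝ).prod (ContinuousLinearMap.fst ℝ ℝ ℝ)

lemma pconjL_apply (z : Cp) : pconjL z = pconj z := rfl

lemma D'_pconj {f : Cp → Cp} {q : Cp} (s : Cp) (hf : DifferentiableAt ℝ f q) :
    D' s (fun r => pconj (f r)) q = pconj (D' (pconj s) f q) := by
  have h : fderiv ℝ (fun r => pconj (f r)) q = pconjL.comp (fderiv ℝ f q) :=
    (pconjL.hasFDerivAt.comp q hf.hasFDerivAt).fderiv
  simp only [D', h, ContinuousLinearMap.comp_apply, pconjL_apply]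
  apply Prod.ext <;>
    simp only [pconj, oR, Prod.fst_mul, Prod.snd_mul, Prod.fst_add, Prod.snd_add] <;> ring

lemma diff_pconj {f : Cp → Cp} {q : Cp} (hf : DifferentiableAt ℝ f q) :
    DifferentiableAt ℝ (fun r => pconj (f r)) q :=
  pconjL.differentiableAt.comp q hf

/-- Derivative of pexp. -/
def pexpL (z : Cp) : Cp →L[ℝ] Cp :=
  ((Real.exp z.1) • (ContinuousLinearMap.fst ℝ ℝ ℝ)).prod
    ((Real.exp z.2) • (ContinuousLinearMap.snd ℝ ℝ ℝ))

lemma pexpL_apply (z v : Cp) : pexpL z v = pexp z * v := by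
  apply Prod.ext <;> simp [pexpL, pexp, Prod.fst_mul, Prod.snd_mul] <;> ring

lemma hasFDerivAt_pexp (z : Cp) : HasFDerivAt pexp (pexpL z) z := by
  apply HasFDerivAt.prodMk
  · exact (Real.hasDerivAt_exp z.1).comp_hasFDerivAt z hasFDerivAt_fst
  · exact (Real.hasDerivAt_exp z.2).comp_hasFDerivAt z hasFDerivAt_snd

lemma D'_pexp {g : Cp → Cp} {q : Cp} (s : Cp) (hg : DifferentiableAt ℝ g q) :
    D' s (fun r => pexp (g r)) q = pexp (g q) * D' s g q := by
  have h : fderiv ℝ (fun r => pexp (g r)) q = (pexpL (g q)).comp (fderiv ℝ g q) :=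
    ((hasFDerivAt_pexp (g q)).comp q hg.hasFDerivAt).fderiv
  simp only [D', h, ContinuousLinearMap.comp_apply, pexpL_apply]; ring

lemma diff_pexp {g : Cp → Cp} {q : Cp} (hg : DifferentiableAt ℝ g q) :
    DifferentiableAt ℝ (fun r => pexp (g r)) q :=
  (hasFDerivAt_pexp (g q)).differentiableAt.comp q hg

/-- Formula for the derivative of the Dirac potential shape. -/
lemma D'_potential (s : Cp) (G f g u v : Cp → Cp) (q : Cp)
    (hG : DifferentiableAt ℝ G q) (hf : DifferentiableAt ℝ f q)
    (hg : DifferentiableAt ℝ g q) (hu : DifferentiableAt ℝ u q)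
    (hv : DifferentiableAt ℝ v q) :
    D' s (fun r => -(G r * (f r * g r + u r * v r)) + ip*oR (1/2) * (f r * g r - u r * v r)) q
      = -(G q * ((f q * D' s g q + g q * D' s f q) + (u q * D' s v q + v q * D' s u q))
            + (f q * g q + u q * v q) * D' s G q)
        + ip*oR (1/2) * ((f q * D' s g q + g q * D' s f q)
            - (u q * D' s v q + v q * D' s u q)) := by
  have hfg : DifferentiableAt ℝ (fun r => f r * g r) q := hf.mul hg
  have huv : DifferentiableAt ℝ (fun r => u r * v r) q := hu.mul hv
  rw [D'_add (f := fun r => -(G r * (f r * g r + u r * v r)))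
      (g := fun r => ip*oR (1/2) * (f r * g r - u r * v r)) s
      (hG.mul (hfg.add huv)).neg ((hfg.sub huv).const_mul _),
    D'_neg, D'_mul (g := fun r => f r * g r + u r * v r) s hG (hfg.add huv), D'_add s hfg huv,
    D'_const_mul (f := fun r => f r * g r - u r * v r) s _ (hfg.sub huv), D'_sub s hfg huv,
    D'_mul s hf hg, D'_mul s hu hv]

end LaxAux


open LaxAux in
/-- The nonlinear Dirac equation for (ψ₁, ψ₂) with potential 𝒰 = ε̃·exp(w/2) is
equivalent to the Lax pair system ∂_zψ̃ = ψ̃Ũ, ∂_z̄ψ̃ = ψ̃Ṽ for the row vector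
ψ̃ = (ψ₁, ψ₂). -/
theorem lax_pair_equiv_dirac (D : Set Cp) (hD : IsOpen D)
    (ψ₁ ψ₂ : Cp → Cp) (H : Cp → ℝ)
    (hψ₁ : ContDiffOn ℝ 1 ψ₁ D) (hψ₂ : ContDiffOn ℝ 1 ψ₂ D)
    (hHreg : ContDiffOn ℝ 1 H D)
    (w : Cp → Cp) (hwreg : ContDiffOn ℝ 1 w D)
    (ε : Cp) (hε : ε = 1 ∨ ε = -1 ∨ ε = ip ∨ ε = -ip)
    (eu h U φ₃ A B : Cp → Cp)
    (heu : ∀ q, eu q = 2 * (ψ₂ q * pconj (ψ₂ q) + ψ₁ q * pconj (ψ₁ q)))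
    (hh : ∀ q, h q = 2 * (ψ₂ q * pconj (ψ₂ q) - ψ₁ q * pconj (ψ₁ q)))
    (hU : ∀ q, U q = -(oR (H q) / 2) * eu q + ip / 4 * h q)
    (hUw : ∀ q ∈ D, U q = ε * pexp (w q / 2))
    (hφ₃ : ∀ q, φ₃ q = 2 * ψ₁ q * pconj (ψ₂ q))
    (hA : ∀ q, A q = 2 * (ψ₁ q * dz (fun r => pconj (ψ₂ r)) q
        - pconj (ψ₂ q) * dz ψ₁ q) - 4 * ip * (ψ₁ q) ^ 2 * (pconj (ψ₂ q)) ^ 2)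
    (hB : ∀ q, B q = oR (1/4) * (2 * oR (H q) - ip) * A q - oR (1/4) * (φ₃ q) ^ 2) :
    (∀ q ∈ D, dz ψ₂ q + U q * ψ₁ q = 0 ∧ -(dzbar ψ₁ q) + U q * ψ₂ q = 0)
    ↔ (∀ q ∈ D,
        dzRow (fun r => !![ψ₁ r, ψ₂ r]) q =
          !![ψ₁ q, ψ₂ q] *
            !![oR (1/2) * dz w q
                  + oR (1/2) * dz (fun r => oR (H r)) q * ε * pexp (-(w q) / 2) * eu q,
                -(ε * pexp (w q / 2));
               B q * ε * pexp (-(w q) / 2), 0] ∧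
        dzbarRow (fun r => !![ψ₁ r, ψ₂ r]) q =
          !![ψ₁ q, ψ₂ q] *
            !![0, -(pconj (B q) * ε * pexp (-(w q) / 2));
               ε * pexp (w q / 2),
                oR (1/2) * dzbar w q
                  + oR (1/2) * dzbar (fun r => oR (H r)) q * ε * pexp (-(w q) / 2) * eu q]) := by
  constructor
  · -- Dirac → Lax pair
    intro hd q hq
    have hmem : D ∈ nhds q := hD.mem_nhds hq
    have hdψ₁ : DifferentiableAt ℝ ψ₁ q :=
      (hψ₁.differentiableOn one_ne_zero).differentiableAt hmem
    have hdψ₂ : DifferentiableAt ℝ ψ₂ q :=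
      (hψ₂.differentiableOn one_ne_zero).differentiableAt hmem
    have hdH : DifferentiableAt ℝ H q :=
      (hHreg.differentiableOn one_ne_zero).differentiableAt hmem
    have hdw : DifferentiableAt ℝ w q :=
      (hwreg.differentiableOn one_ne_zero).differentiableAt hmem
    have hdG : DifferentiableAt ℝ (fun r => oR (H r)) q := hdH.prodMk hdH
    have hdc1 : DifferentiableAt ℝ (fun r => pconj (ψ₁ r)) q := diff_pconj hdψ₁
    have hdc2 : DifferentiableAt ℝ (fun r => pconj (ψ₂ r)) q := diff_pconj hdψ₂
    obtain ⟨hdir1, hdir2⟩ := hd q hq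
    have hd1 : dz ψ₂ q = -(U q * ψ₁ q) := by linear_combination hdir1
    have hd2 : dzbar ψ₁ q = U q * ψ₂ q := by linear_combination -hdir2
    have hUfun : U = fun r => -(oR (H r) * (ψ₂ r * pconj (ψ₂ r) + ψ₁ r * pconj (ψ₁ r)))
        + ip*oR (1/2) * (ψ₂ r * pconj (ψ₂ r) - ψ₁ r * pconj (ψ₁ r)) := by
      funext r
      rw [hU r, heu r, hh r]
      apply Prod.ext <;>
        simp only [ip, oR, pconj, Prod.fst_mul, Prod.snd_mul, Prod.fst_add, Prod.snd_add,
          Prod.fst_sub, Prod.snd_sub, Prod.fst_neg, Prod.snd_neg,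
          Prod.fst_div, Prod.snd_div] <;>
      · norm_num
        ring
    have hUval : U q = -(oR (H q) * (ψ₂ q * pconj (ψ₂ q) + ψ₁ q * pconj (ψ₁ q)))
        + ip*oR (1/2) * (ψ₂ q * pconj (ψ₂ q) - ψ₁ q * pconj (ψ₁ q)) := by
      conv_lhs => rw [hUfun]
    have hpU : pconj (U q) = -(oR (H q) * (ψ₂ q * pconj (ψ₂ q) + ψ₁ q * pconj (ψ₁ q)))
        - ip*oR (1/2) * (ψ₂ q * pconj (ψ₂ q) - ψ₁ q * pconj (ψ₁ q)) := by
      rw [hUval]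
      simp only [pconj_add, pconj_sub, pconj_neg, pconj_mul, pconj_oR, pconj_ip, pconj_pconj]
      ring
    have hcd1 : pconj (dz ψ₁ q) = dzbar (fun r => pconj (ψ₁ r)) q := by
      rw [dzbar_eq, D'_pconj (-ip) hdψ₁, pconj_neg, pconj_ip, neg_neg, ← dz_eq]
    have hcdc2 : pconj (dz (fun r => pconj (ψ₂ r)) q) = dzbar ψ₂ q := by
      rw [dz_eq, D'_pconj ip hdψ₂, pconj_pconj, pconj_ip, ← dzbar_eq]
    have hdzc1 : dz (fun r => pconj (ψ₁ r)) q
        = (-(oR (H q) * (ψ₂ q * pconj (ψ₂ q) + ψ₁ q * pconj (ψ₁ q)))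
            - ip*oR (1/2) * (ψ₂ q * pconj (ψ₂ q) - ψ₁ q * pconj (ψ₁ q))) * pconj (ψ₂ q) := by
      rw [dz_eq, D'_pconj ip hdψ₁, pconj_ip, ← dzbar_eq, hd2, pconj_mul, hpU]
    have hdbc2 : dzbar (fun r => pconj (ψ₂ r)) q
        = -((-(oR (H q) * (ψ₂ q * pconj (ψ₂ q) + ψ₁ q * pconj (ψ₁ q)))
            - ip*oR (1/2) * (ψ₂ q * pconj (ψ₂ q) - ψ₁ q * pconj (ψ₁ q))) * pconj (ψ₁ q)) := by
      rw [dzbar_eq, D'_pconj (-ip) hdψ₂, pconj_neg, pconj_ip, neg_neg, ← dz_eq, hd1,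
        pconj_neg, pconj_mul, hpU]
    have hdzU : dz U q
        = -(oR (H q) * ((ψ₂ q * dz (fun r => pconj (ψ₂ r)) q + pconj (ψ₂ q) * dz ψ₂ q)
              + (ψ₁ q * dz (fun r => pconj (ψ₁ r)) q + pconj (ψ₁ q) * dz ψ₁ q))
            + (ψ₂ q * pconj (ψ₂ q) + ψ₁ q * pconj (ψ₁ q)) * dz (fun r => oR (H r)) q)
          + ip*oR (1/2) * ((ψ₂ q * dz (fun r => pconj (ψ₂ r)) q + pconj (ψ₂ q) * dz ψ₂ q)
              - (ψ₁ q * dz (fun r => pconj (ψ₁ r)) q + pconj (ψ₁ q) * dz ψ₁ q)) := by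
      conv_lhs => rw [hUfun]
      simp only [dz_eq]
      exact D'_potential ip (fun r => oR (H r)) ψ₂ (fun r => pconj (ψ₂ r)) ψ₁
        (fun r => pconj (ψ₁ r)) q hdG hdψ₂ hdc2 hdψ₁ hdc1
    have hdbU : dzbar U q
        = -(oR (H q) * ((ψ₂ q * dzbar (fun r => pconj (ψ₂ r)) q + pconj (ψ₂ q) * dzbar ψ₂ q)
              + (ψ₁ q * dzbar (fun r => pconj (ψ₁ r)) q + pconj (ψ₁ q) * dzbar ψ₁ q))
            + (ψ₂ q * pconj (ψ₂ q) + ψ₁ q * pconj (ψ₁ q)) * dzbar (fun r => oR (H r)) q)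
          + ip*oR (1/2) * ((ψ₂ q * dzbar (fun r => pconj (ψ₂ r)) q + pconj (ψ₂ q) * dzbar ψ₂ q)
              - (ψ₁ q * dzbar (fun r => pconj (ψ₁ r)) q + pconj (ψ₁ q) * dzbar ψ₁ q)) := by
      conv_lhs => rw [hUfun]
      simp only [dzbar_eq]
      exact D'_potential (-ip) (fun r => oR (H r)) ψ₂ (fun r => pconj (ψ₂ r)) ψ₁
        (fun r => pconj (ψ₁ r)) q hdG hdψ₂ hdc2 hdψ₁ hdc1
    have star1 : U q * dz ψ₁ q
        = ψ₁ q * (dz U q + oR (1/2) * dz (fun r => oR (H r)) q * eu q) + ψ₂ q * B q := by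
      have k := key1 (oR (H q)) (dz (fun r => oR (H r)) q) (ψ₁ q) (ψ₂ q)
        (pconj (ψ₁ q)) (pconj (ψ₂ q)) (dz ψ₁ q) (dz (fun r => pconj (ψ₂ r)) q)
      rw [heu q, hB q, hA q, hφ₃ q, hdzU, hd1, hdzc1, hUval]
      linear_combination k
    have star2 : U q * dzbar ψ₂ q
        = ψ₁ q * (-(pconj (B q)))
          + ψ₂ q * (dzbar U q + oR (1/2) * dzbar (fun r => oR (H r)) q * eu q) := by
      have k := key2 (oR (H q)) (dzbar (fun r => oR (H r)) q) (ψ₁ q) (ψ₂ q)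
        (pconj (ψ₁ q)) (pconj (ψ₂ q)) (dzbar ψ₂ q) (dzbar (fun r => pconj (ψ₁ r)) q)
      rw [heu q, hB q, hA q, hφ₃ q]
      simp only [pconj_mul, pconj_sub, pconj_add, pconj_neg, pconj_oR, pconj_ip,
        pconj_pconj, pconj_two, pconj_four, pconj_pow_two, hcd1, hcdc2]
      rw [hdbU, hd2, hdbc2, hUval]
      linear_combination k
    have hee : ε * ε = 1 := by
      rcases hε with h | h | h | h <;> subst h <;> apply Prod.ext <;>
        simp [ip, Prod.fst_mul, Prod.snd_mul, Prod.fst_neg, Prod.snd_neg]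
    have hVU : ε * pexp (-(w q) / 2) * U q = 1 := by
      rw [hUw q hq]
      have h0 : -(w q) / 2 + w q / 2 = 0 := by
        apply Prod.ext <;>
          simp only [Prod.fst_add, Prod.snd_add, Prod.fst_div, Prod.snd_div,
            Prod.fst_neg, Prod.snd_neg, Prod.fst_zero, Prod.snd_zero] <;> ring
      calc ε * pexp (-(w q) / 2) * (ε * pexp (w q / 2))
          = (ε * ε) * pexp (-(w q) / 2 + w q / 2) := by rw [pexp_add]; ring
        _ = 1 := by rw [hee, h0, pexp_zero, one_mul]
    have hwhalf : DifferentiableAt ℝ (fun r => oR (1/2) * w r) q := hdw.const_mul _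
    have hev : U =ᶠ[nhds q] fun r => ε * pexp (oR (1/2) * w r) := by
      filter_upwards [hmem] with r hr
      rw [hUw r hr, div_two_eq]
    have hdzUw : dz U q = U q * (oR (1/2) * dz w q) := by
      rw [dz_eq, D'_congr ip hev, D'_const_mul ip ε (diff_pexp hwhalf), D'_pexp ip hwhalf,
        D'_const_mul ip (oR (1/2)) hdw, hUw q hq, div_two_eq, dz_eq]
      ring
    have hdbUw : dzbar U q = U q * (oR (1/2) * dzbar w q) := by
      rw [dzbar_eq, D'_congr (-ip) hev, D'_const_mul (-ip) ε (diff_pexp hwhalf),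
        D'_pexp (-ip) hwhalf, D'_const_mul (-ip) (oR (1/2)) hdw, hUw q hq, div_two_eq,
        dzbar_eq]
      ring
    rw [hdzUw] at star1
    rw [hdbUw] at star2
    constructor
    · refine Matrix.ext fun i j => ?_
      fin_cases i <;> fin_cases j <;>
        simp only [dzRow, Fin.zero_eta, Fin.mk_one, Matrix.of_apply, Matrix.mul_apply, Fin.sum_univ_two,
          Matrix.cons_val', Matrix.cons_val_zero, Matrix.cons_val_one, Matrix.head_cons,
          Matrix.empty_val', Matrix.cons_val_fin_one, Matrix.head_fin_const, Fin.isValue]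
      · linear_combination (ε * pexp (-(w q) / 2)) * star1
          + (ψ₁ q * (oR (1/2) * dz w q) - dz ψ₁ q) * hVU
      · linear_combination hdir1 - ψ₁ q * hUw q hq
    · refine Matrix.ext fun i j => ?_
      fin_cases i <;> fin_cases j <;>
        simp only [dzbarRow, Fin.zero_eta, Fin.mk_one, Matrix.of_apply, Matrix.mul_apply, Fin.sum_univ_two,
          Matrix.cons_val', Matrix.cons_val_zero, Matrix.cons_val_one, Matrix.head_cons,
          Matrix.empty_val', Matrix.cons_val_fin_one, Matrix.head_fin_const, Fin.isValue]
      · linear_combination ψ₂ q * hUw q hq - hdir2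
      · linear_combination (ε * pexp (-(w q) / 2)) * star2
          + (ψ₂ q * (oR (1/2) * dzbar w q) - dzbar ψ₂ q) * hVU
  · -- Lax pair → Dirac
    intro hl q hq
    obtain ⟨h1, h2⟩ := hl q hq
    have E1 := congrFun (congrFun h1 0) 1
    have E2 := congrFun (congrFun h2 0) 0
    simp only [dzRow, dzbarRow, Matrix.of_apply, Matrix.mul_apply, Fin.sum_univ_two,
      Matrix.cons_val', Matrix.cons_val_zero, Matrix.cons_val_one, Matrix.head_cons,
      Matrix.empty_val', Matrix.cons_val_fin_one, Matrix.head_fin_const, Fin.isValue]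
      at E1 E2
    constructor
    · linear_combination E1 + ψ₁ q * hUw q hq
    · linear_combination -E2 + ψ₂ q * hUw q hq
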